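/- Hoeffding's covariance bound: for any square-integrable random variables X and Y with marginal distribution functions F and G, cov(X, Y) ≤ cov(F^{-1}(U), G^{-1}(U)) where U is uniform on (0,1). -/

import Mathlib

open MeasureTheory ProbabilityTheory Real Filter

noncomputable def cov' {Ω : Type*} [MeasurableSpace Ω] (μ : Measure Ω) (X Y : Ω → ℝ) : ℝ :=
  (∫ ω, X ω * Y ω ∂μ) - (∫ ω, X ω ∂μ) * (∫ ω, Y ω ∂μ)

noncomputable def var' {Ω : Type*} [MeasurableSpace Ω] (μ : Measure Ω) (X : Ω → ℝ) : ℝ :=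
  cov' μ X X

noncomputable def corr' {Ω : Type*} [MeasurableSpace Ω] (μ : Measure Ω) (X Y : Ω → ℝ) : ℝ :=
  cov' μ X Y / (Real.sqrt (var' μ X) * Real.sqrt (var' μ Y))

noncomputable def quantile (ν : Measure ℝ) (p : ℝ) : ℝ := sInf {x | p ≤ cdf ν x}

noncomputable def comono {Ω : Type*} [MeasurableSpace Ω] (μ : Measure Ω) (U : Ω → ℝ) (X : Ω → ℝ) :
    Ω → ℝ :=
  fun ω => quantile (Measure.map X μ) (U ω)

noncomputable def RHIX {Ω : Type*} [MeasurableSpace Ω] (μ : Measure Ω) (U : Ω → ℝ) {d : ℕ}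
    (w : Fin d → ℝ) (X : Fin d → Ω → ℝ) : ℝ :=
  (∑ p ∈ Finset.univ.offDiag, w p.1 * w p.2 * cov' μ (X p.1) (X p.2)) /
  (∑ p ∈ Finset.univ.offDiag, w p.1 * w p.2 * cov' μ (comono μ U (X p.1)) (comono μ U (X p.2)))

section

open Set Topology


noncomputable def dd (a a' : ℝ) (s : ℝ) : ℝ :=
  (if a' ≤ s then (1:ℝ) else 0) - (if a ≤ s then (1:ℝ) else 0)

lemma dd_eq (a a' : ℝ) : dd a a' = fun s =>
    (Ico a' a).indicator (fun _ => (1:ℝ)) s - (Ico a a').indicator (fun _ => (1:ℝ)) s := by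
  funext s
  simp only [dd, indicator_apply, mem_Ico]
  split_ifs <;> simp_all <;> linarith

lemma intInd (c d : ℝ) : Integrable ((Ico c d).indicator (fun _ => (1:ℝ))) volume := by
  rw [integrable_indicator_iff measurableSet_Ico]
  exact integrableOn_const measure_Ico_lt_top.ne

lemma intInd_integral (c d : ℝ) :
    ∫ s, (Ico c d).indicator (fun _ => (1:ℝ)) s = max (d - c) 0 := by
  rw [integral_indicator_const (1:ℝ) measurableSet_Ico, smul_eq_mul, mul_one, measureReal_def, Real.volume_Ico,
    ENNReal.toReal_ofReal']

lemma dd_integrable (a a' : ℝ) : Integrable (dd a a') volume := by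
  rw [dd_eq]; exact (intInd _ _).sub (intInd _ _)

lemma dd_integral (a a' : ℝ) : ∫ s, dd a a' s = a - a' := by
  rw [dd_eq, integral_sub (intInd _ _) (intInd _ _), intInd_integral, intInd_integral]
  rcases le_total a a' with h | h
  · rw [max_eq_right (by linarith), max_eq_left (by linarith)]; ring
  · rw [max_eq_left (by linarith), max_eq_right (by linarith)]; ring

lemma dd_abs (a a' : ℝ) : (fun s => ‖dd a a' s‖) = fun s =>
    (Ico a' a).indicator (fun _ => (1:ℝ)) s + (Ico a a').indicator (fun _ => (1:ℝ)) s := by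
  funext s
  simp only [dd, Real.norm_eq_abs, indicator_apply, mem_Ico]
  split_ifs <;> simp_all <;> linarith

lemma dd_abs_integral (a a' : ℝ) : ∫ s, ‖dd a a' s‖ = |a - a'| := by
  rw [dd_abs, integral_add (intInd _ _) (intInd _ _), intInd_integral, intInd_integral]
  rcases le_total a a' with h | h
  · rw [max_eq_right (by linarith), max_eq_left (by linarith), abs_of_nonpos (by linarith)]; ring
  · rw [max_eq_left (by linarith), max_eq_right (by linarith), abs_of_nonneg (by linarith)]; ring

lemma K2_integrable (a a' b b' : ℝ) :
    Integrable (fun p : ℝ × ℝ => dd a a' p.1 * dd b b' p.2) volume := by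
  rw [Measure.volume_eq_prod]
  exact (dd_integrable a a').mul_prod (dd_integrable b b')

lemma K2_integral (a a' b b' : ℝ) :
    ∫ p : ℝ × ℝ, dd a a' p.1 * dd b b' p.2 = (a - a') * (b - b') := by
  rw [Measure.volume_eq_prod, integral_prod_mul, dd_integral, dd_integral]

lemma K2_norm_integral (a a' b b' : ℝ) :
    ∫ p : ℝ × ℝ, ‖dd a a' p.1 * dd b b' p.2‖ = |a - a'| * |b - b'| := by
  have h := integral_prod_mul (μ := (volume : Measure ℝ)) (ν := (volume : Measure ℝ))
      (fun s => ‖dd a a' s‖) (fun s => ‖dd b b' s‖)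
  rw [dd_abs_integral, dd_abs_integral] at h
  rw [Measure.volume_eq_prod]
  simp_rw [norm_mul]
  exact h

lemma l2_mul {Ω : Type*} [MeasurableSpace Ω] {μ : Measure Ω} {f g : Ω → ℝ}
    (hf : MemLp f 2 μ) (hg : MemLp g 2 μ) : Integrable (fun ω => f ω * g ω) μ := by
  have h : MemLp (f • g) 1 μ :=
    MemLp.smul hg hf
  exact memLp_one_iff_integrable.1 h



lemma quantile_le_iff {ν : Measure ℝ} [IsProbabilityMeasure ν] {u : ℝ} (x : ℝ)
    (h0 : 0 < u) (h1 : u < 1) : quantile ν u ≤ x ↔ u ≤ cdf ν x := by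
  have hne : {y | u ≤ cdf ν y}.Nonempty :=
    (Filter.Tendsto.eventually_const_le h1 (tendsto_cdf_atTop ν)).exists
  have hbdd : BddBelow {y | u ≤ cdf ν y} := by
    obtain ⟨z, hz⟩ := (Filter.Tendsto.eventually_lt_const h0 (tendsto_cdf_atBot ν)).exists
    exact ⟨z, fun y hy => le_of_not_gt fun hlt => hz.not_ge (hy.trans (monotone_cdf ν hlt.le))⟩
  constructor
  · intro hq
    have key : u ≤ cdf ν (sInf {y | u ≤ cdf ν y}) := by
      have hrc : Tendsto (cdf ν) (𝓝[>] (sInf {y | u ≤ cdf ν y}))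
          (𝓝 (cdf ν (sInf {y | u ≤ cdf ν y}))) :=
        Tendsto.mono_left ((cdf ν).right_continuous _)
          (nhdsWithin_mono _ Ioi_subset_Ici_self)
      refine ge_of_tendsto hrc ?_
      filter_upwards [self_mem_nhdsWithin] with y hy
      obtain ⟨z, hz, hzy⟩ := (csInf_lt_iff hbdd hne).1 hy
      exact hz.trans (monotone_cdf ν hzy.le)
    exact key.trans (monotone_cdf ν hq)
  · intro hx
    exact csInf_le hbdd hx

noncomputable def mq (ν : Measure ℝ) (p : ℝ) : ℝ := if 0 < p ∧ p < 1 then quantile ν p else 0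

lemma measurable_mq (ν : Measure ℝ) [IsProbabilityMeasure ν] : Measurable (mq ν) := by
  refine measurable_of_Iic fun a => ?_
  have h : mq ν ⁻¹' Iic a =
      (Ioo (0:ℝ) 1 ∩ Iic (cdf ν a)) ∪ ((Ioo (0:ℝ) 1)ᶜ ∩ {p : ℝ | (0:ℝ) ≤ a}) := by
    ext p
    by_cases hp : 0 < p ∧ p < 1
    · simp only [mem_preimage, mem_Iic, mq, if_pos hp, quantile_le_iff a hp.1 hp.2,
        mem_union, mem_inter_iff, mem_Ioo, mem_compl_iff, mem_setOf_eq]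
      tauto
    · simp only [mem_preimage, mem_Iic, mq, if_neg hp,
        mem_union, mem_inter_iff, mem_Ioo, mem_compl_iff, mem_setOf_eq]
      tauto
  rw [h]
  exact (measurableSet_Ioo.inter measurableSet_Iic).union
    (measurableSet_Ioo.compl.inter (MeasurableSet.const _))



noncomputable def KK {Ω : Type*} (X Y : Ω → ℝ) : (Ω × Ω) × ℝ × ℝ → ℝ :=
  fun q => dd (X q.1.1) (X q.1.2) q.2.1 * dd (Y q.1.1) (Y q.1.2) q.2.2

section Hoeffding

variable {Ω : Type*} [MeasurableSpace Ω] (μ : Measure Ω) [IsProbabilityMeasure μ]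
  (X Y : Ω → ℝ)

-- integrable indicator helper
lemma indInt (c : Set Ω) (hc : MeasurableSet c) :
    Integrable (c.indicator fun _ => (1:ℝ)) μ := by
  rw [integrable_indicator_iff hc]
  exact integrableOn_const (measure_lt_top μ c).ne

variable {X Y}

lemma inner_eq (hXm : Measurable X) (hYm : Measurable Y) (s t : ℝ) :
    ∫ w : Ω × Ω, dd (X w.1) (X w.2) s * dd (Y w.1) (Y w.2) t ∂(μ.prod μ)
      = 2 * ((μ {ω | X ω ≤ s ∧ Y ω ≤ t}).toReal
        - (μ {ω | X ω ≤ s}).toReal * (μ {ω | Y ω ≤ t}).toReal) := by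
  set a : Ω → ℝ := ({ω | X ω ≤ s}).indicator (fun _ => (1:ℝ)) with ha_def
  set b : Ω → ℝ := ({ω | Y ω ≤ t}).indicator (fun _ => (1:ℝ)) with hb_def
  have hAs : MeasurableSet {ω | X ω ≤ s} := hXm measurableSet_Iic
  have hBt : MeasurableSet {ω | Y ω ≤ t} := hYm measurableSet_Iic
  have ha : Integrable a μ := indInt μ _ hAs
  have hb : Integrable b μ := indInt μ _ hBt
  have hab : Integrable (fun ω => a ω * b ω) μ := by
    refine hb.bdd_mul ha.aestronglyMeasurable (c := 1) (Eventually.of_forall fun ω => ?_)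
    simp only [ha_def, indicator_apply]
    split_ifs <;> simp
  have hone : Integrable (fun _ : Ω => (1:ℝ)) μ := integrable_const 1
  have habi : ∫ ω, a ω * b ω ∂μ = (μ {ω | X ω ≤ s ∧ Y ω ≤ t}).toReal := by
    have heq : (fun ω => a ω * b ω)
        = ({ω | X ω ≤ s} ∩ {ω | Y ω ≤ t}).indicator (fun _ => (1:ℝ)) := by
      funext ω
      by_cases h1 : X ω ≤ s <;> by_cases h2 : Y ω ≤ t <;>
        simp [ha_def, hb_def, indicator_apply, h1, h2, mem_setOf_eq]
    rw [heq, integral_indicator_const (1:ℝ) (hAs.inter hBt), smul_eq_mul, mul_one]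
    congr 1
  have hai : ∫ ω, a ω ∂μ = (μ {ω | X ω ≤ s}).toReal := by
    rw [ha_def, integral_indicator_const (1:ℝ) hAs, smul_eq_mul, mul_one, measureReal_def]
  have hbi : ∫ ω, b ω ∂μ = (μ {ω | Y ω ≤ t}).toReal := by
    rw [hb_def, integral_indicator_const (1:ℝ) hBt, smul_eq_mul, mul_one, measureReal_def]
  have expand : (fun w : Ω × Ω => dd (X w.1) (X w.2) s * dd (Y w.1) (Y w.2) t)
      = fun w => ((fun _ : Ω => (1:ℝ)) w.1 * (fun ω => a ω * b ω) w.2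
          - b w.1 * a w.2 - a w.1 * b w.2)
          + (fun ω => a ω * b ω) w.1 * (fun _ : Ω => (1:ℝ)) w.2 := by
    funext w
    simp only [dd, ha_def, hb_def, indicator_apply, mem_setOf_eq]
    split_ifs <;> ring
  have i1 : Integrable (fun w : Ω × Ω => (fun _ : Ω => (1:ℝ)) w.1 * (fun ω => a ω * b ω) w.2)
      (μ.prod μ) := hone.mul_prod hab
  have i2 : Integrable (fun w : Ω × Ω => b w.1 * a w.2) (μ.prod μ) := hb.mul_prod ha
  have i3 : Integrable (fun w : Ω × Ω => a w.1 * b w.2) (μ.prod μ) := ha.mul_prod hb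
  have i4 : Integrable (fun w : Ω × Ω => (fun ω => a ω * b ω) w.1 * (fun _ : Ω => (1:ℝ)) w.2)
      (μ.prod μ) := hab.mul_prod hone
  have i12 : Integrable (fun w : Ω × Ω =>
      (fun _ : Ω => (1:ℝ)) w.1 * (fun ω => a ω * b ω) w.2 - b w.1 * a w.2) (μ.prod μ) :=
    i1.sub i2
  have i123 : Integrable (fun w : Ω × Ω =>
      (fun _ : Ω => (1:ℝ)) w.1 * (fun ω => a ω * b ω) w.2 - b w.1 * a w.2
        - a w.1 * b w.2) (μ.prod μ) := i12.sub i3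
  have k1 : ∫ w : Ω × Ω, (fun _ : Ω => (1:ℝ)) w.1 * (fun ω => a ω * b ω) w.2 ∂(μ.prod μ)
      = (∫ _ω : Ω, (1:ℝ) ∂μ) * ∫ ω, a ω * b ω ∂μ :=
    integral_prod_mul (μ := μ) (ν := μ) (fun _ : Ω => (1:ℝ)) (fun ω => a ω * b ω)
  have k2 : ∫ w : Ω × Ω, b w.1 * a w.2 ∂(μ.prod μ)
      = (∫ ω, b ω ∂μ) * ∫ ω, a ω ∂μ := integral_prod_mul _ _
  have k3 : ∫ w : Ω × Ω, a w.1 * b w.2 ∂(μ.prod μ)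
      = (∫ ω, a ω ∂μ) * ∫ ω, b ω ∂μ := integral_prod_mul _ _
  have k4 : ∫ w : Ω × Ω, (fun ω => a ω * b ω) w.1 * (fun _ : Ω => (1:ℝ)) w.2 ∂(μ.prod μ)
      = (∫ ω, a ω * b ω ∂μ) * ∫ _ω : Ω, (1:ℝ) ∂μ :=
    integral_prod_mul (μ := μ) (ν := μ) (fun ω => a ω * b ω) (fun _ : Ω => (1:ℝ))
  rw [expand, integral_add i123 i4, integral_sub i12 i3,
    integral_sub i1 i2, k1, k2, k3, k4, habi, hai, hbi]
  simp only [integral_const, measure_univ, probReal_univ, ENNReal.toReal_one, smul_eq_mul, one_mul, mul_one]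
  ring

lemma hoeffding (hXm : Measurable X) (hYm : Measurable Y)
    (hX : MemLp X 2 μ) (hY : MemLp Y 2 μ) :
    Integrable (fun p : ℝ × ℝ =>
        (μ {ω | X ω ≤ p.1 ∧ Y ω ≤ p.2}).toReal
          - (μ {ω | X ω ≤ p.1}).toReal * (μ {ω | Y ω ≤ p.2}).toReal) volume ∧
    cov' μ X Y = ∫ p : ℝ × ℝ,
        ((μ {ω | X ω ≤ p.1 ∧ Y ω ≤ p.2}).toReal
          - (μ {ω | X ω ≤ p.1}).toReal * (μ {ω | Y ω ≤ p.2}).toReal) := by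
  set ν := μ.prod μ with hν
  have hmeas : Measurable (KK X Y) := by
    unfold KK dd
    apply Measurable.mul
    · apply Measurable.sub <;>
      · apply Measurable.ite _ measurable_const measurable_const
        first
        | exact measurableSet_le (hXm.comp (measurable_fst.snd)) (measurable_snd.fst)
        | exact measurableSet_le (hXm.comp (measurable_fst.fst)) (measurable_snd.fst)
    · apply Measurable.sub <;>
      · apply Measurable.ite _ measurable_const measurable_const
        first
        | exact measurableSet_le (hYm.comp (measurable_fst.snd)) (measurable_snd.snd)
        | exact measurableSet_le (hYm.comp (measurable_fst.fst)) (measurable_snd.snd)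
  have hfstPres : MeasurePreserving (Prod.fst : Ω × Ω → Ω) ν μ :=
    ⟨measurable_fst, by simp [hν]⟩
  have hsndPres : MeasurePreserving (Prod.snd : Ω × Ω → Ω) ν μ :=
    ⟨measurable_snd, by simp [hν]⟩
  have hX1 : MemLp (fun w : Ω × Ω => X w.1) 2 ν := hX.comp_measurePreserving hfstPres
  have hX2 : MemLp (fun w : Ω × Ω => X w.2) 2 ν := hX.comp_measurePreserving hsndPres
  have hY1 : MemLp (fun w : Ω × Ω => Y w.1) 2 ν := hY.comp_measurePreserving hfstPres
  have hY2 : MemLp (fun w : Ω × Ω => Y w.2) 2 ν := hY.comp_measurePreserving hsndPres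
  have hintK : Integrable (KK X Y) (ν.prod (volume : Measure (ℝ × ℝ))) := by
    rw [integrable_prod_iff hmeas.aestronglyMeasurable]
    constructor
    · exact Eventually.of_forall fun w => by
        simpa only [KK] using K2_integrable (X w.1) (X w.2) (Y w.1) (Y w.2)
    · have heq : (fun w : Ω × Ω => ∫ p : ℝ × ℝ, ‖KK X Y (w, p)‖)
          = fun w => |X w.1 - X w.2| * |Y w.1 - Y w.2| :=
        funext fun w => by
          simpa only [KK] using K2_norm_integral (X w.1) (X w.2) (Y w.1) (Y w.2)
      rw [heq]
      have := (l2_mul (hX1.sub hX2) (hY1.sub hY2)).abs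
      simpa [abs_mul] using this
  -- Fubini
  have hswap : ∫ w, (∫ p : ℝ × ℝ, KK X Y (w, p)) ∂ν
      = ∫ p : ℝ × ℝ, (∫ w, KK X Y (w, p) ∂ν) :=
    integral_integral_swap (f := fun w p => KK X Y (w, p)) hintK
  -- LHS
  have hLHS : ∫ w, (∫ p : ℝ × ℝ, KK X Y (w, p)) ∂ν = 2 * cov' μ X Y := by
    have h1 : (fun w : Ω × Ω => ∫ p : ℝ × ℝ, KK X Y (w, p))
        = fun w => (X w.1 - X w.2) * (Y w.1 - Y w.2) :=
      funext fun w => by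
        simpa only [KK] using K2_integral (X w.1) (X w.2) (Y w.1) (Y w.2)
    rw [h1]
    have e : (fun w : Ω × Ω => (X w.1 - X w.2) * (Y w.1 - Y w.2))
        = fun w => ((fun ω => X ω * Y ω) w.1 * (fun _ : Ω => (1:ℝ)) w.2
            - X w.1 * Y w.2 - Y w.1 * X w.2)
            + (fun _ : Ω => (1:ℝ)) w.1 * (fun ω => X ω * Y ω) w.2 :=
      funext fun w => by ring
    have hXYint : Integrable (fun ω => X ω * Y ω) μ := l2_mul hX hY
    have hXint : Integrable X μ := hX.integrable one_le_two
    have hYint : Integrable Y μ := hY.integrable one_le_two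
    have hone : Integrable (fun _ : Ω => (1:ℝ)) μ := integrable_const 1
    have j1 := hXYint.mul_prod hone
    have j2 := hXint.mul_prod hYint
    have j3 := hYint.mul_prod hXint
    have j4 := hone.mul_prod hXYint
    have j12 : Integrable (fun w : Ω × Ω =>
        (fun ω => X ω * Y ω) w.1 * (fun _ : Ω => (1:ℝ)) w.2 - X w.1 * Y w.2) ν := j1.sub j2
    have j123 : Integrable (fun w : Ω × Ω =>
        (fun ω => X ω * Y ω) w.1 * (fun _ : Ω => (1:ℝ)) w.2 - X w.1 * Y w.2
          - Y w.1 * X w.2) ν := j12.sub j3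
    have m1 : ∫ w : Ω × Ω, (fun ω => X ω * Y ω) w.1 * (fun _ : Ω => (1:ℝ)) w.2 ∂ν
        = (∫ ω, X ω * Y ω ∂μ) * ∫ _ω : Ω, (1:ℝ) ∂μ :=
      integral_prod_mul (μ := μ) (ν := μ) (fun ω => X ω * Y ω) (fun _ : Ω => (1:ℝ))
    have m2 : ∫ w : Ω × Ω, X w.1 * Y w.2 ∂ν = (∫ ω, X ω ∂μ) * ∫ ω, Y ω ∂μ :=
      integral_prod_mul _ _
    have m3 : ∫ w : Ω × Ω, Y w.1 * X w.2 ∂ν = (∫ ω, Y ω ∂μ) * ∫ ω, X ω ∂μ :=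
      integral_prod_mul _ _
    have m4 : ∫ w : Ω × Ω, (fun _ : Ω => (1:ℝ)) w.1 * (fun ω => X ω * Y ω) w.2 ∂ν
        = (∫ _ω : Ω, (1:ℝ) ∂μ) * ∫ ω, X ω * Y ω ∂μ :=
      integral_prod_mul (μ := μ) (ν := μ) (fun _ : Ω => (1:ℝ)) (fun ω => X ω * Y ω)
    rw [e, integral_add j123 j4, integral_sub j12 j3,
      integral_sub j1 j2, m1, m2, m3, m4]
    simp only [integral_const, measure_univ, probReal_univ, ENNReal.toReal_one, smul_eq_mul, one_mul, mul_one]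
    unfold cov'
    ring
  -- RHS
  have hinner : (fun p : ℝ × ℝ => ∫ w, KK X Y (w, p) ∂ν)
      = fun p : ℝ × ℝ => 2 * ((μ {ω | X ω ≤ p.1 ∧ Y ω ≤ p.2}).toReal
          - (μ {ω | X ω ≤ p.1}).toReal * (μ {ω | Y ω ≤ p.2}).toReal) :=
    funext fun p => by
      simpa only [KK] using inner_eq μ hXm hYm p.1 p.2
  have hint2 : Integrable (fun p : ℝ × ℝ => ∫ w, KK X Y (w, p) ∂ν) volume :=
    hintK.integral_prod_right
  rw [hinner] at hint2 hswap
  constructor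
  · have := hint2.const_mul (1/2 : ℝ)
    simpa using this
  · rw [hLHS] at hswap
    rw [integral_const_mul] at hswap
    linarith

end Hoeffding

end

open Set in
theorem stmt_15 {Ω : Type*} [MeasurableSpace Ω] (μ : Measure Ω) [IsProbabilityMeasure μ]
    (U : Ω → ℝ) (hUm : Measurable U)
    (hU : Measure.map U μ = volume.restrict (Set.Ioo (0 : ℝ) 1))
    (X Y : Ω → ℝ) (hXm : Measurable X) (hYm : Measurable Y)
    (hX : MemLp X 2 μ) (hY : MemLp Y 2 μ) :
    cov' μ X Y ≤ cov' μ (comono μ U X) (comono μ U Y) := by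
  have hνX : IsProbabilityMeasure (Measure.map X μ) :=
    Measure.isProbabilityMeasure_map hXm.aemeasurable
  have hνY : IsProbabilityMeasure (Measure.map Y μ) :=
    Measure.isProbabilityMeasure_map hYm.aemeasurable
  set Z : Ω → ℝ := fun ω => mq (Measure.map X μ) (U ω) with hZ_def
  set W : Ω → ℝ := fun ω => mq (Measure.map Y μ) (U ω) with hW_def
  have hZm : Measurable Z := (measurable_mq _).comp hUm
  have hWm : Measurable W := (measurable_mq _).comp hUm
  -- U lands in (0,1) a.e.
  have hU01 : ∀ᵐ ω ∂μ, U ω ∈ Ioo (0:ℝ) 1 := by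
    have h1 : μ (U ⁻¹' Ioo 0 1) = 1 := by
      rw [← Measure.map_apply hUm measurableSet_Ioo, hU,
        Measure.restrict_apply measurableSet_Ioo]
      simp [Real.volume_Ioo]
    have hc := measure_compl (μ := μ) (hUm (measurableSet_Ioo (a := (0:ℝ)) (b := 1)))
      (measure_ne_top μ _)
    rw [h1, measure_univ, tsub_self] at hc
    exact ae_iff.2 hc
  -- a.e. equality of comono with measurable modification
  have hZae : comono μ U X =ᵐ[μ] Z := by
    filter_upwards [hU01] with ω hω
    simp [comono, hZ_def, mq, hω.1, hω.2]
  have hWae : comono μ U Y =ᵐ[μ] W := by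
    filter_upwards [hU01] with ω hω
    simp [comono, hW_def, mq, hω.1, hω.2]
  have hcovZW : cov' μ (comono μ U X) (comono μ U Y) = cov' μ Z W := by
    unfold cov'
    rw [integral_congr_ae (f := fun ω => comono μ U X ω * comono μ U Y ω) (g := fun ω => Z ω * W ω) (hZae.mul hWae), integral_congr_ae hZae, integral_congr_ae hWae]
  -- distribution of U
  have key : ∀ m : ℝ, 0 ≤ m → m ≤ 1 → μ {ω | U ω ≤ m} = ENNReal.ofReal m := by
    intro m hm0 hm1
    have h0 : {ω | U ω ≤ m} = U ⁻¹' Iic m := rfl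
    rw [h0, ← Measure.map_apply hUm measurableSet_Iic, hU,
      Measure.restrict_apply measurableSet_Iic]
    rcases lt_or_eq_of_le hm1 with h | h
    · have h2 : Iic m ∩ Ioo (0:ℝ) 1 = Ioc 0 m := by
        ext x
        constructor
        · rintro ⟨h1', h2', h3'⟩
          exact ⟨h2', h1'⟩
        · rintro ⟨h1', h2'⟩
          exact ⟨h2', h1', lt_of_le_of_lt h2' h⟩
      rw [h2, Real.volume_Ioc]
      simp
    · have h2 : Iic m ∩ Ioo (0:ℝ) 1 = Ioo 0 1 := by
        rw [inter_eq_right]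
        intro x hx
        exact le_of_lt (h ▸ hx.2)
      rw [h2, Real.volume_Ioo, ← h]
      simp
  -- marginal / joint cdfs of (Z, W)
  have hμZ : ∀ s, μ {ω | Z ω ≤ s} = ENNReal.ofReal (cdf (Measure.map X μ) s) := by
    intro s
    have hae : ({ω | Z ω ≤ s} : Set Ω) =ᵐ[μ]
        ({ω | U ω ≤ cdf (Measure.map X μ) s} : Set Ω) := by
      rw [Filter.eventuallyEq_set]
      filter_upwards [hU01] with ω hω
      simp only [mem_setOf_eq, hZ_def, mq, if_pos (And.intro hω.1 hω.2)]
      exact quantile_le_iff s hω.1 hω.2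
    rw [measure_congr hae]
    exact key _ (cdf_nonneg _ _) (cdf_le_one _ _)
  have hμW : ∀ t, μ {ω | W ω ≤ t} = ENNReal.ofReal (cdf (Measure.map Y μ) t) := by
    intro t
    have hae : ({ω | W ω ≤ t} : Set Ω) =ᵐ[μ]
        ({ω | U ω ≤ cdf (Measure.map Y μ) t} : Set Ω) := by
      rw [Filter.eventuallyEq_set]
      filter_upwards [hU01] with ω hω
      simp only [mem_setOf_eq, hW_def, mq, if_pos (And.intro hω.1 hω.2)]
      exact quantile_le_iff t hω.1 hω.2
    rw [measure_congr hae]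
    exact key _ (cdf_nonneg _ _) (cdf_le_one _ _)
  have hμZW : ∀ s t, μ {ω | Z ω ≤ s ∧ W ω ≤ t}
      = ENNReal.ofReal (min (cdf (Measure.map X μ) s) (cdf (Measure.map Y μ) t)) := by
    intro s t
    have hae : ({ω | Z ω ≤ s ∧ W ω ≤ t} : Set Ω) =ᵐ[μ]
        ({ω | U ω ≤ min (cdf (Measure.map X μ) s) (cdf (Measure.map Y μ) t)} : Set Ω) := by
      rw [Filter.eventuallyEq_set]
      filter_upwards [hU01] with ω hω
      simp only [mem_setOf_eq, hZ_def, hW_def, mq, if_pos (And.intro hω.1 hω.2),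
        quantile_le_iff s hω.1 hω.2, quantile_le_iff t hω.1 hω.2, le_min_iff]
    rw [measure_congr hae]
    exact key _ (le_min (cdf_nonneg _ _) (cdf_nonneg _ _))
      (min_le_of_left_le (cdf_le_one _ _))
  -- cdf identities
  have hFX : ∀ s, cdf (Measure.map X μ) s = (μ {ω | X ω ≤ s}).toReal := by
    intro s
    rw [cdf_eq_real, measureReal_def, Measure.map_apply hXm measurableSet_Iic]
    rfl
  have hFY : ∀ t, cdf (Measure.map Y μ) t = (μ {ω | Y ω ≤ t}).toReal := by
    intro t
    rw [cdf_eq_real, measureReal_def, Measure.map_apply hYm measurableSet_Iic]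
    rfl
  -- MemLp of Z, W
  have hmapZ : Measure.map Z μ = Measure.map X μ := by
    refine Measure.ext_of_Iic _ _ fun s => ?_
    rw [Measure.map_apply hZm measurableSet_Iic]
    show μ {ω | Z ω ≤ s} = _
    rw [hμZ s, ofReal_cdf]
  have hmapW : Measure.map W μ = Measure.map Y μ := by
    refine Measure.ext_of_Iic _ _ fun t => ?_
    rw [Measure.map_apply hWm measurableSet_Iic]
    show μ {ω | W ω ≤ t} = _
    rw [hμW t, ofReal_cdf]
  have hZ2 : MemLp Z 2 μ := by
    have h1 : MemLp (id : ℝ → ℝ) 2 (Measure.map X μ) :=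
      (memLp_map_measure_iff aestronglyMeasurable_id hXm.aemeasurable).2 hX
    rw [← hmapZ] at h1
    exact (memLp_map_measure_iff aestronglyMeasurable_id hZm.aemeasurable).1 h1
  have hW2 : MemLp W 2 μ := by
    have h1 : MemLp (id : ℝ → ℝ) 2 (Measure.map Y μ) :=
      (memLp_map_measure_iff aestronglyMeasurable_id hYm.aemeasurable).2 hY
    rw [← hmapW] at h1
    exact (memLp_map_measure_iff aestronglyMeasurable_id hWm.aemeasurable).1 h1
  -- Hoeffding identity for both pairs
  obtain ⟨hint1, heq1⟩ := hoeffding μ hXm hYm hX hY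
  obtain ⟨hint2, heq2⟩ := hoeffding μ hZm hWm hZ2 hW2
  rw [hcovZW, heq1, heq2]
  refine integral_mono hint1 hint2 fun p => ?_
  have h1 : (μ {ω | Z ω ≤ p.1}).toReal = (μ {ω | X ω ≤ p.1}).toReal := by
    rw [hμZ, ENNReal.toReal_ofReal (cdf_nonneg _ _), hFX]
  have h2 : (μ {ω | W ω ≤ p.2}).toReal = (μ {ω | Y ω ≤ p.2}).toReal := by
    rw [hμW, ENNReal.toReal_ofReal (cdf_nonneg _ _), hFY]
  have h3 : (μ {ω | Z ω ≤ p.1 ∧ W ω ≤ p.2}).toReal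
      = min ((μ {ω | X ω ≤ p.1}).toReal) ((μ {ω | Y ω ≤ p.2}).toReal) := by
    rw [hμZW, ENNReal.toReal_ofReal (le_min (cdf_nonneg _ _) (cdf_nonneg _ _)), hFX, hFY]
  have h4 : (μ {ω | X ω ≤ p.1 ∧ Y ω ≤ p.2}).toReal
      ≤ min ((μ {ω | X ω ≤ p.1}).toReal) ((μ {ω | Y ω ≤ p.2}).toReal) := by
    refine le_min ?_ ?_
    · exact ENNReal.toReal_mono (measure_ne_top μ _)
        (measure_mono fun ω hω => hω.1)
    · exact ENNReal.toReal_mono (measure_ne_top μ _)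
        (measure_mono fun ω hω => hω.2)
  simp only
  rw [h1, h2, h3]
  linarith
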